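/- For every real a with 0 < a < 1, |∫₀¹ dx / ((1 + x)√(1 − x)√(a + 1 − x)) − (1/2) log(8/a)| ≤ (a/2) log(1 + 1/a). -/

import Mathlib

set_option maxHeartbeats 1000000

open Real MeasureTheory Set

private lemma maj_int : IntegrableOn (fun x : ℝ => (1 - x) ^ (-(1/2) : ℝ)) (Ioo (0:ℝ) 1) := by
  have h1 : IntervalIntegrable (fun x : ℝ => x ^ (-(1/2):ℝ)) volume 0 1 :=
    intervalIntegral.intervalIntegrable_rpow' (by norm_num)
  have h2 := (h1.comp_sub_left 1).symm
  norm_num at h2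
  have h3 := (intervalIntegrable_iff_integrableOn_Ioc_of_le (by norm_num : (0:ℝ) ≤ 1)).mp h2
  exact (integrableOn_Ioc_iff_integrableOn_Ioo).mp h3

private lemma int_aux {a : ℝ} (ha : 0 < a) (f : ℝ → ℝ) (hc : ContinuousOn f (Ioo 0 1))
    (hb : ∀ x ∈ Ioo (0:ℝ) 1, |f x| ≤ (Real.sqrt a)⁻¹ * (1 - x) ^ (-(1/2):ℝ)) :
    IntegrableOn f (Ioo (0:ℝ) 1) := by
  apply Integrable.mono' ((maj_int.const_mul ((Real.sqrt a)⁻¹)) : IntegrableOn _ _ _)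
  · exact hc.aestronglyMeasurable measurableSet_Ioo
  · rw [ae_restrict_iff' measurableSet_Ioo]
    exact ae_of_all _ fun x hx => by simpa [Real.norm_eq_abs] using hb x hx

theorem stmt10 (a : ℝ) (ha : 0 < a) (ha1 : a < 1) :
    |(∫ x in Set.Ioo (0:ℝ) 1,
        1 / ((1 + x) * Real.sqrt (1 - x) * Real.sqrt (a + 1 - x))) -
      (1 / 2) * Real.log (8 / a)| ≤ (a / 2) * Real.log (1 + 1 / a) := by
  have h01 : (0:ℝ) ≤ 1 := by norm_num
  have hsa : 0 < Real.sqrt a := Real.sqrt_pos.mpr ha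
  have hs_pos : ∀ x ∈ Ioo (0:ℝ) 1, 0 < Real.sqrt (1 - x) := fun x hx =>
    Real.sqrt_pos.mpr (by linarith [hx.2])
  have ht_pos : ∀ x ∈ Icc (0:ℝ) 1, 0 < Real.sqrt (a + 1 - x) := fun x hx =>
    Real.sqrt_pos.mpr (by linarith [hx.2])
  have ht_ge : ∀ x ∈ Ioo (0:ℝ) 1, Real.sqrt a ≤ Real.sqrt (a + 1 - x) := fun x hx =>
    Real.sqrt_le_sqrt (by linarith [hx.2])
  have hst : ∀ x ∈ Icc (0:ℝ) 1, Real.sqrt (1 - x) ≤ Real.sqrt (a + 1 - x) := fun x _ =>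
    Real.sqrt_le_sqrt (by linarith)
  set f : ℝ → ℝ := fun x => 1 / ((1 + x) * Real.sqrt (1 - x) * Real.sqrt (a + 1 - x)) with hf_def
  set gK : ℝ → ℝ := fun x => 1 / (2 * Real.sqrt (1 - x) * Real.sqrt (a + 1 - x)) with hgK_def
  set gG : ℝ → ℝ := fun x => Real.sqrt (1 - x) / (2 * (1 + x) * Real.sqrt (a + 1 - x)) with hgG_def
  have hrpow : ∀ x ∈ Ioo (0:ℝ) 1, (Real.sqrt a)⁻¹ * (1 - x) ^ (-(1/2):ℝ)
      = 1 / (Real.sqrt a * Real.sqrt (1 - x)) := by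
    intro x hx
    rw [Real.rpow_neg (by linarith [hx.2] : (0:ℝ) ≤ 1 - x), ← Real.sqrt_eq_rpow, one_div, mul_inv]
  have hcont_sqrt1 : Continuous fun x : ℝ => Real.sqrt (1 - x) := by fun_prop
  have hcont_sqrt2 : Continuous fun x : ℝ => Real.sqrt (a + 1 - x) := by fun_prop
  -- integrability of f
  have hf_int : IntegrableOn f (Ioo (0:ℝ) 1) := by
    apply int_aux ha
    · apply ContinuousOn.div continuousOn_const (by fun_prop)
      intro x hx
      have hs := hs_pos x hx; have ht := ht_pos x (Ioo_subset_Icc_self hx)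
      have h1x : (0:ℝ) < 1 + x := by linarith [hx.1]
      positivity
    · intro x hx
      rw [hrpow x hx]
      have hs := hs_pos x hx; have ht := ht_pos x (Ioo_subset_Icc_self hx)
      have h1x : (0:ℝ) < 1 + x := by linarith [hx.1]
      have h2 := ht_ge x hx
      rw [hf_def, abs_of_nonneg (by positivity)]
      apply one_div_le_one_div_of_le (by positivity)
      nlinarith [mul_nonneg (hs_pos x hx).le (sub_nonneg.mpr h2),
        mul_nonneg (mul_nonneg hx.1.le hs.le) ht.le]
  -- integrability of gK
  have hgK_int : IntegrableOn gK (Ioo (0:ℝ) 1) := by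
    apply int_aux ha
    · apply ContinuousOn.div continuousOn_const (by fun_prop)
      intro x hx
      have hs := hs_pos x hx; have ht := ht_pos x (Ioo_subset_Icc_self hx)
      positivity
    · intro x hx
      rw [hrpow x hx]
      have hs := hs_pos x hx; have ht := ht_pos x (Ioo_subset_Icc_self hx)
      have h2 := ht_ge x hx
      rw [hgK_def, abs_of_nonneg (by positivity)]
      apply one_div_le_one_div_of_le (by positivity)
      nlinarith [mul_nonneg hs.le (sub_nonneg.mpr h2), mul_nonneg hs.le ht.le]
  -- continuity & integrability of gG
  have hgG_cont : ContinuousOn gG (Icc (0:ℝ) 1) := by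
    apply ContinuousOn.div (by fun_prop) (by fun_prop)
    intro x hx
    have ht := ht_pos x hx
    have h1x : (0:ℝ) < 1 + x := by linarith [hx.1]
    positivity
  have hgG_int : IntegrableOn gG (Ioo (0:ℝ) 1) :=
    (hgG_cont.integrableOn_Icc).mono_set Ioo_subset_Icc_self
  -- pointwise split f = gK + gG
  have hsplit : ∀ x ∈ Ioo (0:ℝ) 1, f x = gK x + gG x := by
    intro x hx
    have hs := hs_pos x hx; have ht := ht_pos x (Ioo_subset_Icc_self hx)
    have h1x : (0:ℝ) < 1 + x := by linarith [hx.1]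
    have hsq : Real.sqrt (1 - x) ^ 2 = 1 - x := Real.sq_sqrt (by linarith [hx.2])
    show (1:ℝ) / ((1 + x) * Real.sqrt (1 - x) * Real.sqrt (a + 1 - x))
      = 1 / (2 * Real.sqrt (1 - x) * Real.sqrt (a + 1 - x))
        + Real.sqrt (1 - x) / (2 * (1 + x) * Real.sqrt (a + 1 - x))
    rw [div_add_div _ _ (by positivity) (by positivity), div_eq_div_iff (by positivity) (by positivity)]
    linear_combination (-(2 * (1 + x) * Real.sqrt (1 - x) * Real.sqrt (a + 1 - x) ^ 2)) * hsq
  have hJsplit : (∫ x in Ioo (0:ℝ) 1, f x)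
      = (∫ x in Ioo (0:ℝ) 1, gK x) + (∫ x in Ioo (0:ℝ) 1, gG x) := by
    rw [← integral_add hgK_int hgG_int]
    exact setIntegral_congr_fun measurableSet_Ioo hsplit
  -- value of K
  have hK : (∫ x in Ioo (0:ℝ) 1, gK x) = Real.log (1 + Real.sqrt (1 + a)) - Real.log a / 2 := by
    have hF : ∀ x ∈ Ioo (0:ℝ) 1, HasDerivAt
        (fun y => -Real.log (Real.sqrt (1 - y) + Real.sqrt (a + 1 - y))) (gK x) x := by
      intro x hx
      have hs := hs_pos x hx; have ht := ht_pos x (Ioo_subset_Icc_self hx)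
      have hds : HasDerivAt (fun y : ℝ => Real.sqrt (1 - y)) (-(1 / (2 * Real.sqrt (1 - x)))) x := by
        have h1 : HasDerivAt (fun y : ℝ => 1 - y) (-1) x := by
          simpa using (hasDerivAt_id x).const_sub 1
        have h2 := (Real.hasDerivAt_sqrt ((by linarith [hx.2] : (0:ℝ) < 1 - x)).ne').comp x h1
        refine h2.congr_deriv ?_; symm; ring
      have hdt : HasDerivAt (fun y : ℝ => Real.sqrt (a + 1 - y)) (-(1 / (2 * Real.sqrt (a + 1 - x)))) x := by
        have h1 : HasDerivAt (fun y : ℝ => a + 1 - y) (-1) x := by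
          simpa using (hasDerivAt_id x).const_sub (a + 1)
        have h2 := (Real.hasDerivAt_sqrt ((by linarith [hx.2] : (0:ℝ) < a + 1 - x)).ne').comp x h1
        refine h2.congr_deriv ?_; symm; ring
      have hsum := hds.add hdt
      have hpos : 0 < Real.sqrt (1 - x) + Real.sqrt (a + 1 - x) := by linarith
      have hlog := (Real.hasDerivAt_log (ne_of_gt hpos)).comp x hsum
      have := hlog.neg
      refine this.congr_deriv ?_; symm
      rw [hgK_def]
      field_simp
      ring
    have hFc : ContinuousOn (fun y => -Real.log (Real.sqrt (1 - y) + Real.sqrt (a + 1 - y)))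
        (Icc (0:ℝ) 1) := by
      apply ContinuousOn.neg
      apply ContinuousOn.log (by fun_prop)
      intro x hx
      have ht := ht_pos x hx
      have hs : 0 ≤ Real.sqrt (1 - x) := Real.sqrt_nonneg _
      positivity
    have hInt : IntervalIntegrable gK volume 0 1 :=
      (intervalIntegrable_iff_integrableOn_Ioc_of_le h01).mpr
        ((integrableOn_Ioc_iff_integrableOn_Ioo).mpr hgK_int)
    have := intervalIntegral.integral_eq_sub_of_hasDeriv_right_of_le h01 hFc
      (fun x hx => (hF x hx).hasDerivWithinAt) hInt
    rw [intervalIntegral.integral_of_le h01, integral_Ioc_eq_integral_Ioo] at this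
    rw [this]
    simp only [show (1:ℝ) - 1 = 0 by ring, show a + 1 - 1 = a by ring,
      show (1:ℝ) - 0 = 1 by ring, show a + 1 - 0 = 1 + a by ring,
      Real.sqrt_zero, Real.sqrt_one, zero_add, Real.log_sqrt ha.le]
    ring
  -- value of ∫ 1/(2(1+x))
  have hc2 : (∫ x in Ioo (0:ℝ) 1, 1 / (2 * (1 + x))) = Real.log 2 / 2 := by
    have hF : ∀ x ∈ uIcc (0:ℝ) 1, HasDerivAt (fun y => Real.log (1 + y) / 2) (1 / (2 * (1 + x))) x := by
      intro x hx
      rw [uIcc_of_le h01] at hx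
      have h1x : (0:ℝ) < 1 + x := by linarith [hx.1]
      have h1 : HasDerivAt (fun y : ℝ => 1 + y) 1 x := by
        simpa using (hasDerivAt_id x).const_add 1
      have h2 := ((Real.hasDerivAt_log (ne_of_gt h1x)).comp x h1).div_const 2
      refine h2.congr_deriv ?_; symm
      field_simp
    have hInt : IntervalIntegrable (fun x : ℝ => 1 / (2 * (1 + x))) volume 0 1 := by
      apply ContinuousOn.intervalIntegrable
      apply ContinuousOn.div continuousOn_const (by fun_prop)
      intro x hx
      rw [uIcc_of_le h01] at hx
      have : (0:ℝ) < 1 + x := by linarith [hx.1]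
      positivity
    have := intervalIntegral.integral_eq_sub_of_hasDerivAt hF hInt
    rw [intervalIntegral.integral_of_le h01, integral_Ioc_eq_integral_Ioo] at this
    rw [this]
    norm_num
  -- the difference integrand h
  set hfun : ℝ → ℝ := fun x => 1 / (2 * (1 + x)) - gG x with hh_def
  have hc2_int : IntegrableOn (fun x : ℝ => 1 / (2 * (1 + x))) (Ioo (0:ℝ) 1) := by
    apply (ContinuousOn.integrableOn_Icc _).mono_set Ioo_subset_Icc_self
    apply ContinuousOn.div continuousOn_const (by fun_prop)
    intro x hx
    have : (0:ℝ) < 1 + x := by linarith [hx.1]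
    positivity
  have hD_eq : (∫ x in Ioo (0:ℝ) 1, hfun x)
      = Real.log 2 / 2 - (∫ x in Ioo (0:ℝ) 1, gG x) := by
    rw [hh_def, integral_sub hc2_int hgG_int, hc2]
  -- pointwise bounds for hfun
  have hfun_nonneg : ∀ x ∈ Ioo (0:ℝ) 1, 0 ≤ hfun x := by
    intro x hx
    have hs := hs_pos x hx; have ht := ht_pos x (Ioo_subset_Icc_self hx)
    have h1x : (0:ℝ) < 1 + x := by linarith [hx.1]
    have hle := hst x (Ioo_subset_Icc_self hx)
    show 0 ≤ 1 / (2 * (1 + x)) - Real.sqrt (1 - x) / (2 * (1 + x) * Real.sqrt (a + 1 - x))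
    rw [sub_nonneg, div_le_div_iff₀ (by positivity) (by positivity)]
    nlinarith
  have hfun_le : ∀ x ∈ Ioo (0:ℝ) 1, hfun x ≤ a / (2 * (a + 1 - x)) := by
    intro x hx
    have hs := hs_pos x hx; have ht := ht_pos x (Ioo_subset_Icc_self hx)
    have h1x : (0:ℝ) < 1 + x := by linarith [hx.1]
    have hle := hst x (Ioo_subset_Icc_self hx)
    have hsq : Real.sqrt (1 - x) ^ 2 = 1 - x := Real.sq_sqrt (by linarith [hx.2])
    have htq : Real.sqrt (a + 1 - x) ^ 2 = a + 1 - x := Real.sq_sqrt (by linarith [hx.2])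
    have key : (Real.sqrt (a + 1 - x) - Real.sqrt (1 - x)) * Real.sqrt (a + 1 - x) ≤ a := by
      nlinarith
    have e1 : 1 / (2 * (1 + x)) - Real.sqrt (1 - x) / (2 * (1 + x) * Real.sqrt (a + 1 - x))
        = (Real.sqrt (a + 1 - x) - Real.sqrt (1 - x)) / (2 * (1 + x) * Real.sqrt (a + 1 - x)) := by
      field_simp
    show 1 / (2 * (1 + x)) - Real.sqrt (1 - x) / (2 * (1 + x) * Real.sqrt (a + 1 - x))
      ≤ a / (2 * (a + 1 - x))
    rw [e1, div_le_div_iff₀ (by positivity) (by linarith [hx.2])]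
    have k1 : (Real.sqrt (a + 1 - x) - Real.sqrt (1 - x)) * (2 * (a + 1 - x))
        = 2 * (((Real.sqrt (a + 1 - x) - Real.sqrt (1 - x)) * Real.sqrt (a + 1 - x)) * Real.sqrt (a + 1 - x)) := by
      linear_combination (-(2 * (Real.sqrt (a + 1 - x) - Real.sqrt (1 - x)))) * htq
    calc (Real.sqrt (a + 1 - x) - Real.sqrt (1 - x)) * (2 * (a + 1 - x))
        = 2 * (((Real.sqrt (a + 1 - x) - Real.sqrt (1 - x)) * Real.sqrt (a + 1 - x)) * Real.sqrt (a + 1 - x)) := k1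
      _ ≤ 2 * (a * Real.sqrt (a + 1 - x)) := by
          have := mul_le_mul_of_nonneg_right key ht.le
          linarith
      _ ≤ a * (2 * (1 + x) * Real.sqrt (a + 1 - x)) := by
          nlinarith [mul_nonneg (mul_nonneg ha.le hx.1.le) ht.le]
  -- value of the majorant integral
  have hM : (∫ x in Ioo (0:ℝ) 1, a / (2 * (a + 1 - x)))
      = (a / 2) * Real.log (1 + 1 / a) := by
    have hF : ∀ x ∈ uIcc (0:ℝ) 1, HasDerivAt (fun y => -(a / 2) * Real.log (a + 1 - y))
        (a / (2 * (a + 1 - x))) x := by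
      intro x hx
      rw [uIcc_of_le h01] at hx
      have htx : (0:ℝ) < a + 1 - x := by linarith [hx.2]
      have h1 : HasDerivAt (fun y : ℝ => a + 1 - y) (-1) x := by
        simpa using (hasDerivAt_id x).const_sub (a + 1)
      have h2 := ((Real.hasDerivAt_log (ne_of_gt htx)).comp x h1).const_mul (-(a/2))
      refine h2.congr_deriv ?_; symm
      field_simp
    have hInt : IntervalIntegrable (fun x : ℝ => a / (2 * (a + 1 - x))) volume 0 1 := by
      apply ContinuousOn.intervalIntegrable
      apply ContinuousOn.div continuousOn_const (by fun_prop)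
      intro x hx
      rw [uIcc_of_le h01] at hx
      have : (0:ℝ) < a + 1 - x := by linarith [hx.2]
      positivity
    have := intervalIntegral.integral_eq_sub_of_hasDerivAt hF hInt
    rw [intervalIntegral.integral_of_le h01, integral_Ioc_eq_integral_Ioo] at this
    rw [this]
    rw [show a + 1 - 1 = a by ring, show a + 1 - 0 = a + 1 by ring]
    rw [show (1:ℝ) + 1 / a = (a + 1) / a by field_simp]
    rw [Real.log_div (by linarith) (ne_of_gt ha)]
    ring
  have hM_int : IntegrableOn (fun x : ℝ => a / (2 * (a + 1 - x))) (Ioo (0:ℝ) 1) := by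
    apply (ContinuousOn.integrableOn_Icc _).mono_set Ioo_subset_Icc_self
    apply ContinuousOn.div continuousOn_const (by fun_prop)
    intro x hx
    have : (0:ℝ) < a + 1 - x := by linarith [hx.2]
    positivity
  have hfun_int : IntegrableOn hfun (Ioo (0:ℝ) 1) := hc2_int.sub hgG_int
  -- D bounds
  have hD_nonneg : 0 ≤ ∫ x in Ioo (0:ℝ) 1, hfun x :=
    setIntegral_nonneg measurableSet_Ioo hfun_nonneg
  have hD_le : (∫ x in Ioo (0:ℝ) 1, hfun x) ≤ (a / 2) * Real.log (1 + 1 / a) := by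
    rw [← hM]
    exact setIntegral_mono_on hfun_int hM_int measurableSet_Ioo hfun_le
  -- P bounds
  have hP_nonneg : 0 ≤ Real.log (1 + Real.sqrt (1 + a)) - Real.log 2 := by
    have h1 : (1:ℝ) ≤ Real.sqrt (1 + a) := by
      have := Real.sqrt_le_sqrt (show (1:ℝ) ≤ 1 + a by linarith)
      rwa [Real.sqrt_one] at this
    have := Real.log_le_log (by norm_num) (by linarith : (2:ℝ) ≤ 1 + Real.sqrt (1 + a))
    linarith
  have hP_le : Real.log (1 + Real.sqrt (1 + a)) - Real.log 2 ≤ (a / 2) * Real.log (1 + 1 / a) := by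
    have hsp : 0 < Real.sqrt (1 + a) := Real.sqrt_pos.mpr (by linarith)
    have e1 : Real.log (1 + Real.sqrt (1 + a)) - Real.log 2
        = Real.log ((1 + Real.sqrt (1 + a)) / 2) := by
      rw [Real.log_div (by positivity) (by norm_num)]
    have h2 : Real.log ((1 + Real.sqrt (1 + a)) / 2) ≤ (1 + Real.sqrt (1 + a)) / 2 - 1 :=
      Real.log_le_sub_one_of_pos (by positivity)
    have h3 : Real.sqrt (1 + a) ≤ 1 + a / 2 := by
      rw [show (1:ℝ) + a / 2 = Real.sqrt ((1 + a / 2) ^ 2) from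
        (Real.sqrt_sq (by linarith)).symm]
      exact Real.sqrt_le_sqrt (by nlinarith)
    have h4 : (1/2:ℝ) ≤ Real.log 2 := by linarith [Real.log_two_gt_d9]
    have h5 : Real.log 2 ≤ Real.log (1 + 1 / a) := by
      apply Real.log_le_log (by norm_num)
      have : (1:ℝ) ≤ 1 / a := by
        rw [le_div_iff₀ ha]; linarith
      linarith
    nlinarith
  -- assemble
  have hlog8 : Real.log (8 / a) = 3 * Real.log 2 - Real.log a := by
    rw [Real.log_div (by norm_num) (ne_of_gt ha)]
    rw [show (8:ℝ) = 2 ^ 3 by norm_num, Real.log_pow]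
    norm_num
  rw [hJsplit, hK, hlog8]
  rw [abs_le]
  constructor
  · linarith [hD_le, hD_eq, hP_nonneg]
  · linarith [hD_nonneg, hD_eq, hP_le]
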